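/- Let $A = \begin{bmatrix} 1 & 0 \\ 0 & 0 \end{bmatrix}$, $B = \begin{bmatrix} 0 & 0 \\ 0 & 1 \end{bmatrix}$, $X = \begin{bmatrix} 0 & 1 \\ 0 & 0 \end{bmatrix} \in \mathbb{M}_2$. Then the block matrix $M = \begin{bmatrix} A & X \\ X^* & B \end{bmatrix} \in \mathbb{M}_4$ is positive semi-definite and satisfies $\| M \|_{\infty} = \| A + B \|_{\infty} + 2 w(X)$, i.e. equality holds in the bound $\| M \|_{\infty} \le \| A + B \|_{\infty} + 2 w(X)$. -/

import Mathlib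

open Matrix
open scoped ComplexOrder

/-- The absolute value `|Z| = (Zᴴ Z)^(1/2)` of a square complex matrix. -/
noncomputable def matAbs {m : Type*} [Fintype m] [DecidableEq m]
    (Z : Matrix m m ℂ) : Matrix m m ℂ :=
  ((Matrix.posSemidef_conjTranspose_mul_self Z).1.eigenvectorUnitary : Matrix m m ℂ) *
    Matrix.diagonal ((↑) ∘ (fun i => Real.sqrt
      ((Matrix.posSemidef_conjTranspose_mul_self Z).1.eigenvalues i))) *
    (star (Matrix.posSemidef_conjTranspose_mul_self Z).1.eigenvectorUnitary : Matrix m m ℂ)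

/-- Functional calculus: apply `f : ℝ → ℝ` to the eigenvalues of a Hermitian matrix
(junk value `0` if the matrix is not Hermitian). -/
noncomputable def hermApply {m : Type*} [Fintype m] [DecidableEq m]
    (f : ℝ → ℝ) (S : Matrix m m ℂ) : Matrix m m ℂ :=
  if hS : S.IsHermitian then
    (hS.eigenvectorUnitary : Matrix m m ℂ) *
      Matrix.diagonal (fun i => (f (hS.eigenvalues i) : ℂ)) *
      (star (hS.eigenvectorUnitary : Matrix m m ℂ))
  else 0

/-- Real power of a positive semi-definite matrix by functional calculus. -/
noncomputable def matPow {m : Type*} [Fintype m] [DecidableEq m]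
    (S : Matrix m m ℂ) (p : ℝ) : Matrix m m ℂ :=
  hermApply (fun x => x ^ p) S

/-- A symmetric (unitarily invariant) norm on complex `m × m` matrices. -/
structure IsSymmetricNorm {m : Type*} [Fintype m] [DecidableEq m]
    (N : Matrix m m ℂ → ℝ) : Prop where
  add_le : ∀ A B, N (A + B) ≤ N A + N B
  smul : ∀ (c : ℂ) (A), N (c • A) = ‖c‖ * N A
  eq_zero_of : ∀ A, N A = 0 → A = 0
  unitary_mul_left : ∀ (U : Matrix.unitaryGroup m ℂ) (A), N (U * A) = N A
  mul_unitary_right : ∀ (U : Matrix.unitaryGroup m ℂ) (A), N (A * U) = N A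

/-- Eigenvalues of a Hermitian matrix (junk value `0` if not Hermitian). -/
noncomputable def eigVals {m : Type*} [Fintype m] [DecidableEq m]
    (Z : Matrix m m ℂ) : m → ℝ :=
  if hZ : Z.IsHermitian then hZ.eigenvalues else 0

/-- Eigenvalues of a Hermitian `n × n` matrix listed in decreasing order. -/
noncomputable def eigDown {n : ℕ} (Z : Matrix (Fin n) (Fin n) ℂ) : Fin n → ℝ :=
  fun i => (eigVals Z ∘ Tuple.sort (eigVals Z)) i.rev

/-- `Z ^ ↓`: the diagonal matrix listing the eigenvalues of `Z` in decreasing order. -/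
noncomputable def downMat {n : ℕ} (Z : Matrix (Fin n) (Fin n) ℂ) : Matrix (Fin n) (Fin n) ℂ :=
  Matrix.diagonal (fun i => (eigDown Z i : ℂ))

/-- Schatten `p`-norm. -/
noncomputable def schattenNorm {m : Type*} [Fintype m] [DecidableEq m]
    (p : ℝ) (Z : Matrix m m ℂ) : ℝ :=
  (∑ i, eigVals (matAbs Z) i ^ p) ^ (1 / p)

/-- Operator norm (largest singular value). -/
noncomputable def opNormInf {m : Type*} [Fintype m] [DecidableEq m]
    (Z : Matrix m m ℂ) : ℝ :=
  ⨆ i, Real.sqrt (eigVals (Zᴴ * Z) i)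

/-- Numerical range. -/
def numRange {m : Type*} [Fintype m] (X : Matrix m m ℂ) : Set ℂ :=
  {z | ∃ x : m → ℂ, ∑ i, ‖x i‖ ^ 2 = 1 ∧ dotProduct (star x) (X *ᵥ x) = z}

/-- Numerical radius. -/
noncomputable def numRadius {m : Type*} [Fintype m] (X : Matrix m m ℂ) : ℝ :=
  sSup ((fun z : ℂ => ‖z‖) '' numRange X)

/- ----------------- auxiliary lemmas ----------------- -/

lemma trace_eq_sum_eig {m : Type*} [Fintype m] [DecidableEq m]
    {A : Matrix m m ℂ} (hA : A.IsHermitian) :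
    A.trace = ∑ i, (hA.eigenvalues i : ℂ) := by
  conv_lhs => rw [hA.spectral_theorem]
  rw [Unitary.conjStarAlgAut_apply]
  rw [Matrix.trace_mul_cycle,
    (Matrix.mem_unitaryGroup_iff').mp (hA.eigenvectorUnitary).2, one_mul,
    Matrix.trace_diagonal]
  rfl

lemma eig_mem_of_sq {m : Type*} [Fintype m] [DecidableEq m]
    {S : Matrix m m ℂ} (hS : S.IsHermitian) (c : ℝ) (hc : S * S = (c : ℂ) • S)
    (i : m) : hS.eigenvalues i = 0 ∨ hS.eigenvalues i = c := by
  by_contra h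
  push_neg at h
  obtain ⟨h0, hcne⟩ := h
  set lam := hS.eigenvalues i with hlam
  have hmem := hS.eigenvalues_mem_spectrum_real i
  rw [spectrum.mem_iff] at hmem
  apply hmem
  have h1 : (algebraMap ℝ (Matrix m m ℂ) lam) = (lam : ℂ) • (1 : Matrix m m ℂ) := by
    rw [Algebra.algebraMap_eq_smul_one]
    ext j k
    simp [Matrix.one_apply, Matrix.smul_apply, Complex.real_smul]
  have h2 : (algebraMap ℝ (Matrix m m ℂ) (c - lam)) = ((c - lam : ℝ) : ℂ) • (1 : Matrix m m ℂ) := by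
    rw [Algebra.algebraMap_eq_smul_one]
    ext j k
    simp [Matrix.one_apply, Matrix.smul_apply, Complex.real_smul]
  have hab : (lam : ℂ) + ((c - lam : ℝ) : ℂ) = (c : ℂ) := by push_cast; ring
  have key : (algebraMap ℝ (Matrix m m ℂ) lam - S) * ((algebraMap ℝ (Matrix m m ℂ) (c - lam)) - S)
      = (((lam : ℂ) * ((c - lam : ℝ) : ℂ))) • (1 : Matrix m m ℂ) := by
    rw [h1, h2]
    simp only [sub_mul, mul_sub, smul_mul_assoc, mul_smul_comm, one_mul, mul_one, smul_smul, hc]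
    rw [← hab]
    module
  have hne : (((lam : ℂ) * ((c - lam : ℝ) : ℂ))) ≠ 0 := by
    apply mul_ne_zero
    · exact Complex.ofReal_ne_zero.mpr h0
    · rw [Complex.ofReal_ne_zero, sub_ne_zero]
      exact fun hh => hcne hh.symm
  have hdet : ((algebraMap ℝ (Matrix m m ℂ) lam - S)).det ≠ 0 := by
    intro hd
    have hk := congrArg Matrix.det key
    rw [Matrix.det_mul, hd, zero_mul, Matrix.det_smul, Matrix.det_one, mul_one] at hk
    exact pow_ne_zero _ hne hk.symm
  exact (Matrix.isUnit_iff_isUnit_det _).mpr (isUnit_iff_ne_zero.mpr hdet)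

lemma eigVals_herm {m : Type*} [Fintype m] [DecidableEq m]
    {Z : Matrix m m ℂ} (hZ : Z.IsHermitian) : eigVals Z = hZ.eigenvalues := by
  rw [eigVals, dif_pos hZ]

lemma ciSup_sqrt_eq {n : Type*} [Fintype n] [Nonempty n] (f : n → ℝ) (c : ℝ)
    (hub : ∀ i, Real.sqrt (f i) ≤ c) (hex : ∃ i, Real.sqrt (f i) = c) :
    ⨆ i, Real.sqrt (f i) = c := by
  obtain ⟨i0, hi0⟩ := hex
  exact le_antisymm (ciSup_le hub)
    (le_ciSup_of_le (Set.Finite.bddAbove (Set.finite_range _)) i0 hi0.ge)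

lemma sqrt_four : Real.sqrt 4 = 2 := by
  rw [show (4:ℝ) = 2 ^ 2 by norm_num, Real.sqrt_sq (by norm_num : (0:ℝ) ≤ 2)]

noncomputable section Aux

def A2 : Matrix (Fin 2) (Fin 2) ℂ := !![1, 0; 0, 0]
def B2 : Matrix (Fin 2) (Fin 2) ℂ := !![0, 0; 0, 1]
def X2 : Matrix (Fin 2) (Fin 2) ℂ := !![0, 1; 0, 0]
def M4 : Matrix (Fin 2 ⊕ Fin 2) (Fin 2 ⊕ Fin 2) ℂ := Matrix.fromBlocks A2 X2 X2ᴴ B2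

lemma M4_herm : M4ᴴ = M4 := by
  ext i j
  rcases i with i|i <;> rcases j with j|j <;> fin_cases i <;> fin_cases j <;>
    simp [M4, A2, B2, X2, Matrix.fromBlocks, Matrix.conjTranspose_apply]

lemma M4_sq : M4 * M4 = (2:ℂ) • M4 := by
  ext i j
  rcases i with i|i <;> rcases j with j|j <;> fin_cases i <;> fin_cases j <;>
    simp [M4, A2, B2, X2, Matrix.fromBlocks, Matrix.mul_apply, Fintype.sum_sum_type,
      Fin.sum_univ_two] <;> norm_num

lemma M4_trace : M4.trace = 2 := by
  simp [M4, A2, B2, X2, Matrix.trace, Matrix.diag, Fintype.sum_sum_type, Fin.sum_univ_two,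
    Matrix.fromBlocks]
  norm_num

lemma M4_posSemidef : M4.PosSemidef := by
  rw [Matrix.posSemidef_iff_dotProduct_mulVec]
  constructor
  · exact M4_herm
  · intro x
    have key : dotProduct (star x) (M4 *ᵥ x)
        = star (x (Sum.inl 0) + x (Sum.inr 1)) * (x (Sum.inl 0) + x (Sum.inr 1)) := by
      simp [M4, A2, B2, X2, dotProduct, Matrix.mulVec, Fintype.sum_sum_type,
        Fin.sum_univ_two, Matrix.fromBlocks, Matrix.conjTranspose_apply]
      ring
    rw [key]
    exact star_mul_self_nonneg _

lemma hS_eq : M4ᴴ * M4 = (2:ℂ) • M4 := by rw [M4_herm, M4_sq]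

lemma opNormInf_M4 : opNormInf M4 = 2 := by
  have hS : (M4ᴴ * M4).IsHermitian := (Matrix.posSemidef_conjTranspose_mul_self M4).1
  have hsq : (M4ᴴ * M4) * (M4ᴴ * M4) = ((4:ℝ) : ℂ) • (M4ᴴ * M4) := by
    rw [hS_eq, smul_mul_assoc, mul_smul_comm, M4_sq, smul_smul, smul_smul]
    norm_num
    module
  have hmem := fun i => eig_mem_of_sq hS 4 hsq i
  have htr : (M4ᴴ * M4).trace = ((4:ℝ) : ℂ) := by
    rw [hS_eq, Matrix.trace_smul, M4_trace]
    norm_num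
  have hsum : ∑ i, hS.eigenvalues i = 4 := by
    have h := (trace_eq_sum_eig hS).symm.trans htr
    exact_mod_cast (by push_cast at h ⊢; exact_mod_cast h : ((∑ i, hS.eigenvalues i : ℝ) : ℂ) = ((4:ℝ) : ℂ))
  have hex : ∃ i, hS.eigenvalues i = 4 := by
    by_contra hno
    push_neg at hno
    have : ∀ i, hS.eigenvalues i = 0 := fun i => (hmem i).resolve_right (hno i)
    rw [Finset.sum_congr rfl (fun i _ => this i), Finset.sum_const, smul_zero] at hsum
    norm_num at hsum
  rw [opNormInf, eigVals_herm hS]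
  apply ciSup_sqrt_eq
  · intro i
    rcases hmem i with h | h <;> rw [h]
    · simp
    · rw [sqrt_four]
  · obtain ⟨i0, hi0⟩ := hex
    exact ⟨i0, by rw [hi0, sqrt_four]⟩

lemma AB_eq_one : A2 + B2 = 1 := by
  ext i j
  fin_cases i <;> fin_cases j <;> simp [A2, B2, Matrix.one_apply]

lemma opNormInf_AB : opNormInf (A2 + B2) = 1 := by
  rw [AB_eq_one, opNormInf]
  simp only [Matrix.conjTranspose_one, one_mul]
  rw [eigVals_herm Matrix.isHermitian_one]
  apply ciSup_sqrt_eq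
  · intro i
    have hm := Matrix.isHermitian_one.eigenvalues_mem_spectrum_real (A := (1 : Matrix (Fin 2) (Fin 2) ℂ)) i
    rw [spectrum.one_eq] at hm
    rw [Set.mem_singleton_iff.mp hm]
    simp
  · refine ⟨0, ?_⟩
    have hm := Matrix.isHermitian_one.eigenvalues_mem_spectrum_real (A := (1 : Matrix (Fin 2) (Fin 2) ℂ)) 0
    rw [spectrum.one_eq] at hm
    rw [Set.mem_singleton_iff.mp hm]
    simp

lemma numRadius_X2 : numRadius X2 = 1 / 2 := by
  have hdot : ∀ x : Fin 2 → ℂ, dotProduct (star x) (X2 *ᵥ x)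
      = (starRingEnd ℂ) (x 0) * x 1 := by
    intro x
    simp [X2, dotProduct, Matrix.mulVec, Fin.sum_univ_two]
  have hub : ∀ y ∈ (fun z : ℂ => ‖z‖) '' numRange X2, y ≤ 1 / 2 := by
    rintro y ⟨z, ⟨x, hx1, hx2⟩, rfl⟩
    rw [← hx2, hdot]
    have habs : ‖(starRingEnd ℂ) (x 0) * x 1‖ = ‖x 0‖ * ‖x 1‖ := by
      rw [norm_mul, Complex.norm_conj]
    rw [show (fun z : ℂ => ‖z‖) ((starRingEnd ℂ) (x 0) * x 1) = ‖(starRingEnd ℂ) (x 0) * x 1‖ from rfl, habs]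
    rw [Fin.sum_univ_two] at hx1
    nlinarith [sq_nonneg (‖x 0‖ - ‖x 1‖), norm_nonneg (x 0), norm_nonneg (x 1)]
  have hmem : (1 / 2 : ℝ) ∈ (fun z : ℂ => ‖z‖) '' numRange X2 := by
    refine ⟨(1 / 2 : ℝ), ⟨fun _ => ((Real.sqrt 2)⁻¹ : ℝ), ?_, ?_⟩, ?_⟩
    · rw [Fin.sum_univ_two]
      have : ‖(((Real.sqrt 2)⁻¹ : ℝ) : ℂ)‖ ^ 2 = 1 / 2 := by
        rw [Complex.norm_real, Real.norm_eq_abs, sq_abs, inv_pow,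
          Real.sq_sqrt (by norm_num : (0:ℝ) ≤ 2)]
        norm_num
      rw [this]; norm_num
    · rw [hdot]
      have h2 : ((Real.sqrt 2 : ℝ) : ℂ) * ((Real.sqrt 2 : ℝ) : ℂ) = 2 := by
        rw [← Complex.ofReal_mul, Real.mul_self_sqrt (by norm_num : (0:ℝ) ≤ 2)]
        norm_num
      rw [Complex.conj_ofReal, ← Complex.ofReal_mul]
      norm_cast
      rw [← mul_inv, Real.mul_self_sqrt (by norm_num : (0:ℝ) ≤ 2)]
      norm_num
    · simp
  rw [numRadius]
  refine le_antisymm (Real.sSup_le hub (by norm_num)) (le_csSup ⟨1/2, hub⟩ hmem)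

end Aux

theorem equality_example :
    (Matrix.fromBlocks (!![1, 0; 0, 0] : Matrix (Fin 2) (Fin 2) ℂ)
        (!![0, 1; 0, 0] : Matrix (Fin 2) (Fin 2) ℂ)
        (!![0, 1; 0, 0] : Matrix (Fin 2) (Fin 2) ℂ)ᴴ
        (!![0, 0; 0, 1] : Matrix (Fin 2) (Fin 2) ℂ)).PosSemidef ∧
      opNormInf (Matrix.fromBlocks (!![1, 0; 0, 0] : Matrix (Fin 2) (Fin 2) ℂ)
          (!![0, 1; 0, 0] : Matrix (Fin 2) (Fin 2) ℂ)
          (!![0, 1; 0, 0] : Matrix (Fin 2) (Fin 2) ℂ)ᴴ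
          (!![0, 0; 0, 1] : Matrix (Fin 2) (Fin 2) ℂ)) =
        opNormInf ((!![1, 0; 0, 0] : Matrix (Fin 2) (Fin 2) ℂ) + !![0, 0; 0, 1]) +
          2 * numRadius (!![0, 1; 0, 0] : Matrix (Fin 2) (Fin 2) ℂ) := by
  show M4.PosSemidef ∧ opNormInf M4 = opNormInf (A2 + B2) + 2 * numRadius X2
  refine ⟨M4_posSemidef, ?_⟩
  rw [opNormInf_M4, opNormInf_AB, numRadius_X2]
  norm_num
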